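/- For a finite simple graph G with vertex set V and a subset V' ⊆ V, the closed neighborhood ideal N_G is contained in the ideal (V')R generated by the variables in V' if and only if V' is a dominating set for G. -/

import Mathlib

/-- `D` is a dominating set of the graph `G`: every vertex is in `D` or adjacent to a
vertex of `D`. -/
def IsDomSet {V : Type*} (G : SimpleGraph V) (D : Finset V) : Prop :=
  ∀ v : V, v ∈ D ∨ ∃ u ∈ D, G.Adj u v

open scoped Classical in
/-- The closed neighborhood ideal of a finite simple graph `G`, generated in
`K[X_v : v ∈ V]` by the products of the variables in the closed neighborhoods of the
vertices. -/
noncomputable def nbhdIdeal {V : Type*} [Fintype V] (K : Type*) [Field K]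
    (G : SimpleGraph V) : Ideal (MvPolynomial V K) :=
  Ideal.span { m | ∃ i : V,
    m = ∏ j ∈ (insert i {j | G.Adj i j} : Set V).toFinset, MvPolynomial.X j }

lemma prod_X_eq_monomial' {V K : Type*} [CommSemiring K] (T : Finset V) :
    (∏ j ∈ T, MvPolynomial.X j : MvPolynomial V K) =
      MvPolynomial.monomial (∑ j ∈ T, Finsupp.single j 1) 1 := by
  classical
  induction T using Finset.induction with
  | empty => simp
  | insert _ _ h ih =>
    rw [Finset.prod_insert h, Finset.sum_insert h, ih, MvPolynomial.X,
      MvPolynomial.monomial_mul, one_mul]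

lemma prod_X_mem_span_iff {V K : Type*} [Field K] (T : Finset V) (D : Finset V) :
    (∏ j ∈ T, MvPolynomial.X j : MvPolynomial V K) ∈
      Ideal.span (MvPolynomial.X '' (D : Set V)) ↔ ∃ i ∈ D, i ∈ T := by
  classical
  rw [prod_X_eq_monomial', MvPolynomial.mem_ideal_span_X_image]
  constructor
  · intro h
    obtain ⟨i, hiD, hi⟩ := h _ (by
      rw [MvPolynomial.mem_support_iff, MvPolynomial.coeff_monomial, if_pos rfl]
      exact one_ne_zero)
    refine ⟨i, hiD, ?_⟩
    by_contra hiT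
    apply hi
    rw [Finset.sum_apply']
    refine Finset.sum_eq_zero fun j hj => ?_
    rw [Finsupp.single_apply, if_neg]
    exact fun h => hiT (h ▸ hj)
  · rintro ⟨i, hiD, hiT⟩ m hm
    rw [MvPolynomial.mem_support_iff, MvPolynomial.coeff_monomial] at hm
    split_ifs at hm with h
    · subst h
      refine ⟨i, hiD, ?_⟩
      rw [Finset.sum_apply']
      have : ∀ j ∈ T, 0 ≤ (Finsupp.single j 1 : V →₀ ℕ) i := fun _ _ => Nat.zero_le _
      have h1 : (Finsupp.single i 1 : V →₀ ℕ) i = 1 := Finsupp.single_eq_same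
      have := Finset.single_le_sum this hiT
      omega
    · exact absurd rfl hm

open scoped Classical in
/-- The closed neighborhood ideal `N_G` is contained in the ideal generated by the
variables indexed by `D` if and only if `D` is a dominating set of `G`. -/
theorem stmt0 {V : Type*} [Fintype V] (K : Type*) [Field K]
    (G : SimpleGraph V) (D : Finset V) :
    nbhdIdeal K G ≤ Ideal.span (MvPolynomial.X '' (D : Set V)) ↔ IsDomSet G D := by
  classical
  have hmem : ∀ i j : V, j ∈ (insert i {j | G.Adj i j} : Set V).toFinset ↔
      j = i ∨ G.Adj i j := by
    intro i j; simp [Set.mem_toFinset]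
  constructor
  · intro h v
    have hv : (∏ j ∈ (insert v {j | G.Adj v j} : Set V).toFinset, MvPolynomial.X j :
        MvPolynomial V K) ∈ nbhdIdeal K G :=
      Ideal.subset_span ⟨v, rfl⟩
    obtain ⟨i, hiD, hiT⟩ := (prod_X_mem_span_iff _ _).mp (h hv)
    rcases (hmem v i).mp hiT with h1 | h2
    · exact Or.inl (h1 ▸ hiD)
    · exact Or.inr ⟨i, hiD, h2.symm⟩
  · intro hdom
    rw [nbhdIdeal, Ideal.span_le]
    rintro m ⟨i, rfl⟩
    rcases hdom i with hiD | ⟨u, huD, hu⟩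
    · exact (prod_X_mem_span_iff _ _).mpr ⟨i, hiD, (hmem i i).mpr (Or.inl rfl)⟩
    · exact (prod_X_mem_span_iff _ _).mpr ⟨u, huD, (hmem i u).mpr (Or.inr hu.symm)⟩
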